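/- (Sufficient decrease, Lemma 3.1.) Assume ρ/2 − L_h/ρ − L_h > 0. Then for ADMM iterates (U^k, V^k, P^k) as in the context and every k ≥ 1, L(U^k, V^k, P^k) − L(U^{k+1}, V^{k+1}, P^{k+1}) ≥ (ρ/2 − L_h/ρ − L_h) · ‖V^{k+1} − V^k‖². -/

import Mathlib

open scoped RealInnerProductSpace
open Filter

/-- Matrix–vector product `H U` as a map between Euclidean spaces. -/
noncomputable def mvec {M N : ℕ} (H : Matrix (Fin N) (Fin M) ℝ)
    (U : EuclideanSpace ℝ (Fin M)) : EuclideanSpace ℝ (Fin N) :=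
  (WithLp.equiv 2 (Fin N → ℝ)).symm (H.mulVec (WithLp.equiv 2 (Fin M → ℝ) U))

/-- The augmented Lagrangian
`L(U,V,P) = f(U) + h(V) + ⟨P, V − HU⟩ + (ρ/2)‖V − HU‖²`. -/
noncomputable def lagr {M N : ℕ} (H : Matrix (Fin N) (Fin M) ℝ) (ρ : ℝ)
    (f : EuclideanSpace ℝ (Fin M) → ℝ) (h : EuclideanSpace ℝ (Fin N) → ℝ)
    (U : EuclideanSpace ℝ (Fin M)) (V P : EuclideanSpace ℝ (Fin N)) : ℝ :=
  f U + h V + ⟪P, V - mvec H U⟫ + (ρ / 2) * ‖V - mvec H U‖ ^ 2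

/-- The box constraint set `K = {U : 0 ≤ Uᵢ ≤ 1 for all i}`. -/
def Kbox (M : ℕ) : Set (EuclideanSpace ℝ (Fin M)) := {U | ∀ i, 0 ≤ U i ∧ U i ≤ 1}

section Aux

variable {F : Type*} [NormedAddCommGroup F] [InnerProductSpace ℝ F] [CompleteSpace F]

/-- First-order optimality for the `V`-subproblem. -/
lemma grad_opt_aux {h : F → ℝ} (hdiff : Differentiable ℝ h) (a ρ : ℝ) (P c v : F)
    (hmin : ∀ w, a + h v + ⟪P, v - c⟫ + (ρ / 2) * ‖v - c‖ ^ 2 ≤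
      a + h w + ⟪P, w - c⟫ + (ρ / 2) * ‖w - c‖ ^ 2) :
    gradient h v + P + ρ • (v - c) = 0 := by
  set g : F → ℝ := fun w => a + h w + ⟪P, w - c⟫ + (ρ / 2) * ⟪w - c, w - c⟫ with hgdef
  have hgmin : IsLocalMin g v := by
    apply Filter.Eventually.of_forall
    intro w
    have := hmin w
    simpa only [hgdef, real_inner_self_eq_norm_sq] using this
  have h0 : HasFDerivAt (fun z : F => z - c) (ContinuousLinearMap.id ℝ F) v :=
    (hasFDerivAt_id v).sub_const c
  have h1 := (hasFDerivAt_const P v).inner ℝ h0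
  have h2 := h0.inner ℝ h0
  have h3 := (hdiff v).hasGradientAt.hasFDerivAt
  have hsum := (((hasFDerivAt_const a v).add h3).add h1).add (h2.const_mul (ρ / 2))
  have hsum' : HasFDerivAt g
      (InnerProductSpace.toDual ℝ F (gradient h v + P + ρ • (v - c))) v := by
    convert hsum using 1
    · rfl
    · rfl
    · rfl
    apply ContinuousLinearMap.ext
    intro w
    simp [InnerProductSpace.toDual_apply_apply, inner_add_left, inner_sub_left,
      inner_sub_right, real_inner_smul_left, real_inner_comm]
    ring
  have hz := hgmin.hasFDerivAt_eq_zero hsum'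
  exact (InnerProductSpace.toDual ℝ F).map_eq_zero_iff.mp hz

/-- Descent lemma (one direction) for functions with Lipschitz gradient. -/
lemma descent_aux {h : F → ℝ} (hdiff : Differentiable ℝ h) {L : ℝ} (hL : 0 < L)
    (hlip : ∀ V W : F, ‖gradient h V - gradient h W‖ ≤ L * ‖V - W‖) (x y : F) :
    h x + ⟪gradient h x, y - x⟫ - (L / 2) * ‖y - x‖ ^ 2 ≤ h y := by
  set d := y - x with hd
  have hline : ∀ t : ℝ, HasDerivAt (fun s : ℝ => x + s • d) d t := fun t => by
    simpa using ((hasDerivAt_id t).smul_const d).const_add x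
  have hφ : ∀ t : ℝ, HasDerivAt (fun s : ℝ => h (x + s • d))
      ⟪gradient h (x + t • d), d⟫ t := by
    intro t
    have hg : HasFDerivAt h
        (InnerProductSpace.toDual ℝ F (gradient h (x + t • d))) (x + t • d) :=
      (hdiff _).hasGradientAt.hasFDerivAt
    have hc := hg.comp_hasDerivAt t (hline t)
    rw [InnerProductSpace.toDual_apply_apply] at hc
    exact hc
  have hgradcont : Continuous (gradient h) := by
    have hlw : LipschitzWith (Real.toNNReal L) (gradient h) := by
      apply LipschitzWith.of_dist_le_mul
      intro a b
      simpa [dist_eq_norm, Real.coe_toNNReal L hL.le] using hlip a b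
    exact hlw.continuous
  have hcont : Continuous fun t : ℝ => ⟪gradient h (x + t • d), d⟫ := by
    apply Continuous.inner _ continuous_const
    exact hgradcont.comp (by continuity)
  have hftc : h y - h x = ∫ t in (0:ℝ)..1, ⟪gradient h (x + t • d), d⟫ := by
    have := intervalIntegral.integral_eq_sub_of_hasDerivAt (f := fun s : ℝ => h (x + s • d))
      (fun t _ => hφ t) (hcont.intervalIntegrable 0 1)
    rw [this]
    norm_num [hd]
  have hpt : ∀ t ∈ Set.Icc (0:ℝ) 1,
      ⟪gradient h x, d⟫ - (L * ‖d‖ ^ 2) * t ≤ ⟪gradient h (x + t • d), d⟫ := by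
    intro t ht
    have h1 : ⟪gradient h (x + t • d), d⟫ - ⟪gradient h x, d⟫
        = ⟪gradient h (x + t • d) - gradient h x, d⟫ := (inner_sub_left _ _ _).symm
    have h2 : ‖gradient h (x + t • d) - gradient h x‖ ≤ L * (t * ‖d‖) := by
      have := hlip (x + t • d) x
      simpa [norm_smul, abs_of_nonneg ht.1] using this
    have h3 := abs_real_inner_le_norm (gradient h (x + t • d) - gradient h x) d
    have h4 := neg_abs_le (⟪gradient h (x + t • d) - gradient h x, d⟫)
    nlinarith [norm_nonneg d, norm_nonneg (gradient h (x + t • d) - gradient h x)]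
  have hmono : (∫ t in (0:ℝ)..1, (⟪gradient h x, d⟫ - (L * ‖d‖ ^ 2) * t))
      ≤ ∫ t in (0:ℝ)..1, ⟪gradient h (x + t • d), d⟫ :=
    intervalIntegral.integral_mono_on (by norm_num)
      ((continuous_const.sub ((continuous_const.mul continuous_id))).intervalIntegrable 0 1)
      (hcont.intervalIntegrable 0 1) hpt
  have hval : (∫ t in (0:ℝ)..1, (⟪gradient h x, d⟫ - (L * ‖d‖ ^ 2) * t))
      = ⟪gradient h x, d⟫ - (L / 2) * ‖d‖ ^ 2 := by
    have hInt : IntervalIntegrable (fun t : ℝ => (L * ‖d‖ ^ 2) * t)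
        MeasureTheory.volume 0 1 :=
      (continuous_const.mul continuous_id).intervalIntegrable 0 1
    rw [intervalIntegral.integral_sub intervalIntegrable_const hInt,
      intervalIntegral.integral_const_mul, integral_id]
    simp
    ring
  linarith [hmono, hval.symm.le, hftc]

end Aux

set_option maxHeartbeats 1000000

/-- Sufficient decrease (Lemma 3.1): if `ρ/2 − L_h/ρ − L_h > 0`, then for every `k ≥ 1`,
`L(U^k,V^k,P^k) − L(U^{k+1},V^{k+1},P^{k+1}) ≥ (ρ/2 − L_h/ρ − L_h)‖V^{k+1} − V^k‖²`. -/
theorem admm_sufficient_decrease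
    {M N : ℕ} (H : Matrix (Fin N) (Fin M) ℝ) (ρ Lh : ℝ)
    (hρ : 0 < ρ) (hLh : 0 < Lh)
    (f : EuclideanSpace ℝ (Fin M) → ℝ) (h : EuclideanSpace ℝ (Fin N) → ℝ)
    (hdiff : Differentiable ℝ h)
    (hlip : ∀ V W : EuclideanSpace ℝ (Fin N),
      ‖gradient h V - gradient h W‖ ≤ Lh * ‖V - W‖)
    (U : ℕ → EuclideanSpace ℝ (Fin M)) (V P : ℕ → EuclideanSpace ℝ (Fin N))
    (hUK : ∀ k, U k ∈ Kbox M)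
    (hUmin : ∀ k, ∀ U' ∈ Kbox M,
      lagr H ρ f h (U (k+1)) (V k) (P k) ≤ lagr H ρ f h U' (V k) (P k))
    (hVmin : ∀ k, ∀ V' : EuclideanSpace ℝ (Fin N),
      lagr H ρ f h (U (k+1)) (V (k+1)) (P k) ≤ lagr H ρ f h (U (k+1)) V' (P k))
    (hPup : ∀ k, P (k+1) = P k + ρ • (V (k+1) - mvec H (U (k+1))))
    (hcond : 0 < ρ / 2 - Lh / ρ - Lh)
    :
    ∀ k : ℕ, 1 ≤ k →
      lagr H ρ f h (U k) (V k) (P k) - lagr H ρ f h (U (k+1)) (V (k+1)) (P (k+1)) ≥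
        (ρ / 2 - Lh / ρ - Lh) * ‖V (k+1) - V k‖ ^ 2 := by
  intro k hk
  obtain ⟨j, rfl⟩ : ∃ j, k = j + 1 := ⟨k - 1, (Nat.succ_pred_eq_of_pos hk).symm⟩
  -- first-order optimality for all V-subproblems
  have gopt : ∀ m : ℕ,
      gradient h (V (m+1)) + P m + ρ • (V (m+1) - mvec H (U (m+1))) = 0 := by
    intro m
    exact grad_opt_aux hdiff (f (U (m+1))) ρ (P m) (mvec H (U (m+1))) (V (m+1))
      (fun w => by simpa only [lagr] using hVmin m w)
  have gP : ∀ m : ℕ, gradient h (V (m+1)) = - P (m+1) := by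
    intro m
    have h1 : gradient h (V (m+1)) + (P m + ρ • (V (m+1) - mvec H (U (m+1)))) = 0 := by
      rw [← add_assoc]; exact gopt m
    rw [hPup m]
    exact eq_neg_of_add_eq_zero_left h1
  have hkey := gopt (j+1)
  have hPk : gradient h (V (j+1)) = - P (j+1) := gP j
  have hPk1 : gradient h (V (j+1+1)) = - P (j+1+1) := gP (j+1)
  -- Term A
  have hA : lagr H ρ f h (U (j+1+1)) (V (j+1)) (P (j+1))
      ≤ lagr H ρ f h (U (j+1)) (V (j+1)) (P (j+1)) := hUmin (j+1) (U (j+1)) (hUK (j+1))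
  -- Term B
  have hB : lagr H ρ f h (U (j+1+1)) (V (j+1)) (P (j+1))
        - lagr H ρ f h (U (j+1+1)) (V (j+1+1)) (P (j+1))
      ≥ (ρ/2 - Lh/2) * ‖V (j+1) - V (j+1+1)‖^2 := by
    have hdesc := descent_aux hdiff hLh hlip (V (j+1+1)) (V (j+1))
    have hnorm : ‖V (j+1) - mvec H (U (j+1+1))‖^2
        = ‖V (j+1) - V (j+1+1)‖^2
          + 2*⟪V (j+1) - V (j+1+1), V (j+1+1) - mvec H (U (j+1+1))⟫
          + ‖V (j+1+1) - mvec H (U (j+1+1))‖^2 := by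
      have h1 := norm_add_sq_real (V (j+1) - V (j+1+1)) (V (j+1+1) - mvec H (U (j+1+1)))
      rw [sub_add_sub_cancel] at h1
      exact h1
    have hnorm2 : (ρ/2) * ‖V (j+1) - mvec H (U (j+1+1))‖^2
        = (ρ/2) * ‖V (j+1) - V (j+1+1)‖^2
          + ρ * ⟪V (j+1) - V (j+1+1), V (j+1+1) - mvec H (U (j+1+1))⟫
          + (ρ/2) * ‖V (j+1+1) - mvec H (U (j+1+1))‖^2 := by
      linear_combination (ρ/2) * hnorm
    have hzero : ⟪gradient h (V (j+1+1)), V (j+1) - V (j+1+1)⟫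
        + ⟪P (j+1), V (j+1) - V (j+1+1)⟫
        + ρ * ⟪V (j+1) - V (j+1+1), V (j+1+1) - mvec H (U (j+1+1))⟫ = 0 := by
      have h1 : (⟪gradient h (V (j+1+1)) + P (j+1)
          + ρ • (V (j+1+1) - mvec H (U (j+1+1))), V (j+1) - V (j+1+1)⟫ : ℝ) = 0 := by
        rw [hkey]; exact inner_zero_left _
      rw [inner_add_left, inner_add_left, real_inner_smul_left] at h1
      linear_combination h1 + ρ * real_inner_comm (V (j+1+1) - mvec H (U (j+1+1)))
        (V (j+1) - V (j+1+1))
    have hip : ⟪P (j+1), V (j+1) - mvec H (U (j+1+1))⟫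
        - ⟪P (j+1), V (j+1+1) - mvec H (U (j+1+1))⟫
        = ⟪P (j+1), V (j+1) - V (j+1+1)⟫ := by
      rw [← inner_sub_right]
      congr 1
      abel
    simp only [lagr]
    linarith [hdesc, hnorm2, hzero, hip]
  -- Term C
  have hC : lagr H ρ f h (U (j+1+1)) (V (j+1+1)) (P (j+1))
        - lagr H ρ f h (U (j+1+1)) (V (j+1+1)) (P (j+1+1))
      ≥ -(Lh^2/ρ) * ‖V (j+1) - V (j+1+1)‖^2 := by
    have hdsub : P (j+1) - P (j+1+1) = -(ρ • (V (j+1+1) - mvec H (U (j+1+1)))) := by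
      rw [hPup (j+1)]
      abel
    have h1 : ⟪P (j+1), V (j+1+1) - mvec H (U (j+1+1))⟫
        - ⟪P (j+1+1), V (j+1+1) - mvec H (U (j+1+1))⟫
        = -(ρ * ‖V (j+1+1) - mvec H (U (j+1+1))‖^2) := by
      rw [← inner_sub_left, hdsub, inner_neg_left, real_inner_smul_left,
        real_inner_self_eq_norm_sq]
    have h2 : ρ • (V (j+1+1) - mvec H (U (j+1+1)))
        = -(gradient h (V (j+1+1)) - gradient h (V (j+1))) := by
      have h21 : P (j+1+1) - P (j+1) = ρ • (V (j+1+1) - mvec H (U (j+1+1))) := by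
        rw [hPup (j+1)]; abel
      rw [← h21, hPk, hPk1]
      abel
    have h3 : ρ * ‖V (j+1+1) - mvec H (U (j+1+1))‖
        = ‖gradient h (V (j+1+1)) - gradient h (V (j+1))‖ := by
      rw [← norm_neg (gradient h (V (j+1+1)) - gradient h (V (j+1))), ← h2, norm_smul,
        Real.norm_eq_abs, abs_of_pos hρ]
    have h5 : ρ * ‖V (j+1+1) - mvec H (U (j+1+1))‖ ≤ Lh * ‖V (j+1) - V (j+1+1)‖ := by
      rw [h3, norm_sub_rev (V (j+1)) (V (j+1+1))]; exact hlip (V (j+1+1)) (V (j+1))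
    have h6' := mul_self_le_mul_self
      (mul_nonneg hρ.le (norm_nonneg (V (j+1+1) - mvec H (U (j+1+1))))) h5
    have h6 : ρ^2 * ‖V (j+1+1) - mvec H (U (j+1+1))‖^2 ≤ Lh^2 * ‖V (j+1) - V (j+1+1)‖^2 := by
      nlinarith [h6']
    have h7 : ρ * ‖V (j+1+1) - mvec H (U (j+1+1))‖^2
        ≤ Lh^2/ρ * ‖V (j+1) - V (j+1+1)‖^2 := by
      rw [div_mul_eq_mul_div, le_div_iff₀ hρ]
      nlinarith [h6]
    simp only [lagr]
    linarith [h1, h7]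
  -- combine
  have hconst : (ρ/2 - Lh/ρ - Lh) ≤ (ρ/2 - Lh/2 - Lh^2/ρ) := by
    have h2L : 2*Lh < ρ := by
      have hpos : 0 < Lh / ρ := div_pos hLh hρ
      linarith
    have heq : (ρ/2 - Lh/2 - Lh^2/ρ) - (ρ/2 - Lh/ρ - Lh)
        = (Lh + Lh*ρ/2 - Lh^2)/ρ := by
      field_simp
      ring
    have hnum : 0 ≤ Lh + Lh*ρ/2 - Lh^2 := by nlinarith
    have hq := div_nonneg hnum hρ.le
    linarith [heq ▸ hq]
  have hmul := mul_le_mul_of_nonneg_right hconst (sq_nonneg ‖V (j+1) - V (j+1+1)‖)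
  rw [show (‖V (j+1+1) - V (j+1)‖ : ℝ) = ‖V (j+1) - V (j+1+1)‖ from norm_sub_rev _ _]
  linarith [hA, hB, hC, hmul]
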